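/- Let c ∈ [0, 1], let θ = 2·arcsin(√c), let β ∈ ℝ, and let M(c) be the complex 2×2 matrix !![2c−1, −2·√(c·(1−c)); −2·√(c·(1−c)), 1−2c]. Then exp(−(i·β) • M(c)) = R_Y(θ) · R_Z(−2β) · R_Y(−θ). -/

import Mathlib

open Matrix

/-- The single-qubit rotation `R_Y(θ)`. -/
noncomputable def RY (θ : ℝ) : Matrix (Fin 2) (Fin 2) ℂ :=
  !![((Real.cos (θ / 2) : ℝ) : ℂ), ((-Real.sin (θ / 2) : ℝ) : ℂ);
     ((Real.sin (θ / 2) : ℝ) : ℂ), ((Real.cos (θ / 2) : ℝ) : ℂ)]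

/-- The single-qubit rotation `R_Z(φ)`. -/
noncomputable def RZ (φ : ℝ) : Matrix (Fin 2) (Fin 2) ℂ :=
  !![Complex.exp (-(Complex.I * φ / 2)), 0; 0, Complex.exp (Complex.I * φ / 2)]

theorem ws_mixer_exp_rotation_decomposition (c : ℝ) (hc : c ∈ Set.Icc (0 : ℝ) 1)
    (θ : ℝ) (hθ : θ = 2 * Real.arcsin (Real.sqrt c)) (β : ℝ)
    (M : Matrix (Fin 2) (Fin 2) ℂ)
    (hM : M = !![((2 * c - 1 : ℝ) : ℂ), ((-2 * Real.sqrt (c * (1 - c)) : ℝ) : ℂ);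
                 ((-2 * Real.sqrt (c * (1 - c)) : ℝ) : ℂ), ((1 - 2 * c : ℝ) : ℂ)]) :
    NormedSpace.exp ((-(Complex.I * β)) • M) = RY θ * RZ (-2 * β) * RY (-θ) := by
  obtain ⟨hc0, hc1⟩ := hc
  set s := Real.sqrt c with hs
  set t := Real.sqrt (1 - c) with ht
  have hs0 : 0 ≤ s := Real.sqrt_nonneg c
  have hs1 : s ≤ 1 := by
    rw [hs, show (1:ℝ) = Real.sqrt 1 by simp]
    exact Real.sqrt_le_sqrt hc1
  have hsin : Real.sin (θ / 2) = s := by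
    rw [hθ]; ring_nf
    exact Real.sin_arcsin (by linarith) hs1
  have hcos : Real.cos (θ / 2) = t := by
    rw [hθ]; ring_nf
    rw [Real.cos_arcsin, Real.sq_sqrt hc0]
  have hss : s * s = c := Real.mul_self_sqrt hc0
  have htt : t * t = 1 - c := Real.mul_self_sqrt (by linarith)
  have hst : Real.sqrt (c * (1 - c)) = s * t := Real.sqrt_mul hc0 _
  have hssC : (s : ℂ) * s = (c : ℂ) := by exact_mod_cast hss
  have httC : (t : ℂ) * t = 1 - (c : ℂ) := by exact_mod_cast htt
  have hdiag : Matrix.diagonal ![Complex.I * β, -(Complex.I * β)] =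
      !![Complex.I * β, 0; 0, -(Complex.I * β)] := by
    ext i j; fin_cases i <;> fin_cases j <;> simp [Matrix.diagonal]
  have hUV : RY θ * RY (-θ) = 1 := by
    simp only [RY, show (-θ)/2 = -(θ/2) by ring, Real.cos_neg, Real.sin_neg, hsin, hcos]
    rw [Matrix.mul_fin_two]
    ext i j
    fin_cases i <;> fin_cases j <;> simp [Matrix.one_apply] <;> push_cast <;>
      (first
        | linear_combination hssC + httC
        | ring)
  have hu : IsUnit (RY θ) := ⟨⟨RY θ, RY (-θ), hUV, mul_eq_one_comm.mp hUV⟩, rfl⟩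
  have hinv : (RY θ)⁻¹ = RY (-θ) := Matrix.inv_eq_right_inv hUV
  have hMconj : (-(Complex.I * β)) • M =
      RY θ * Matrix.diagonal ![Complex.I * β, -(Complex.I * β)] * (RY θ)⁻¹ := by
    rw [hinv, hM, hdiag]
    ext i j
    fin_cases i <;> fin_cases j <;>
      · simp [RY, Matrix.mul_apply, Fin.sum_univ_two, hsin, hcos, hst,
          show (-θ)/2 = -(θ/2) by ring, Real.cos_neg, Real.sin_neg]
        push_cast
        (first
          | linear_combination (Complex.I * β) * (httC - hssC)
          | linear_combination (Complex.I * β) * (hssC - httC)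
          | linear_combination (2 * Complex.I * β) * hssC - (Complex.I * β) * (hssC + httC)
          | linear_combination (Complex.I * β) * (hssC + httC) - (2 * Complex.I * β) * hssC
          | ring)
  rw [hMconj, Matrix.exp_conj _ _ hu, hinv]
  congr 2
  rw [Matrix.exp_diagonal]
  ext i j
  fin_cases i <;> fin_cases j <;>
    · simp [RZ, Matrix.diagonal, ← Complex.exp_eq_exp_ℂ]
      try (congr 1; push_cast; ring)
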